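/- For each k ≥ 1, the measures π_k ν_C, where C ranges over the directed cycles of the de Bruijn graph G_k and π_k ν_C gives weight 1/|C| to each edge of C and 0 elsewhere, are precisely the extreme points of the convex polytope M_k of locally translation invariant probability measures on {0,1}^{k+1}. -/

import Mathlib

/-- Local translation invariance for a measure on `{0,1}^{k+1}`. -/
def IsLTI (k : ℕ) (μ : (Fin (k + 1) → Bool) → ℝ) : Prop :=
  ∀ η : Fin k → Bool, (∑ σ : Bool, μ (Fin.snoc η σ)) = ∑ σ : Bool, μ (Fin.cons σ η)

/-- A directed cycle in the de Bruijn graph `G_k`: a cyclic sequence of pairwise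
distinct vertices `v_0, ..., v_{p-1}` in `{0,1}^k` (cyclic successor given by
`finRotate`) such that consecutive vertices overlap as required for a directed
edge `aθb : aθ → θb` of `G_k` to join them (loops, `p = 1`, are allowed). -/
def IsCycle (k p : ℕ) (v : Fin p → (Fin k → Bool)) : Prop :=
  0 < p ∧ Function.Injective v ∧
    ∀ i : Fin p, ∀ j : ℕ, ∀ h : j + 1 < k,
      v i ⟨j + 1, h⟩ = v (finRotate p i) ⟨j, by omega⟩

/-- The measure `π_k ν_C` on `{0,1}^{k+1}` (the edge set of `G_k`) associated to a
cycle `C` given by vertices `v` : it gives weight `1/|C|` to each edge of `C` and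
`0` to all other edges.  The edge from `v_i` to `v_{i+1}` is the string
`Fin.cons (v_i)_0 (v_{i+1})`. -/
noncomputable def cycleMeasure (k p : ℕ) (hk : 0 < k) (v : Fin p → (Fin k → Bool)) :
    (Fin (k + 1) → Bool) → ℝ := fun η =>
  (p : ℝ)⁻¹ * ∑ i : Fin p,
    if η = Fin.cons (v i ⟨0, hk⟩) (v (finRotate p i)) then 1 else 0

open Finset

section Helpers
variable {k : ℕ}

def hd (k : ℕ) (e : Fin (k+1) → Bool) : Fin k → Bool := fun i => e i.castSucc
def tl (k : ℕ) (e : Fin (k+1) → Bool) : Fin k → Bool := fun i => e i.succ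

lemma cons_hd_tl (e : Fin (k+1) → Bool) : Fin.cons (e 0) (tl k e) = e := by
  funext j
  refine Fin.cases ?_ ?_ j
  · simp
  · intro i; simp [tl]

lemma snoc_hd (e : Fin (k+1) → Bool) : Fin.snoc (hd k e) (e (Fin.last k)) = e := by
  funext j
  refine Fin.lastCases ?_ ?_ j
  · simp
  · intro i; simp [hd]

lemma hd_snoc (w : Fin k → Bool) (σ : Bool) : hd k (Fin.snoc w σ) = w := by
  funext j; simp [hd]

lemma tl_cons (w : Fin k → Bool) (σ : Bool) : tl k (Fin.cons σ w) = w := by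
  funext j; simp [tl]

end Helpers


section Cedge
variable {k p : ℕ} (hk : 0 < k) (v : Fin p → (Fin k → Bool))

def cedge (hk : 0 < k) (v : Fin p → (Fin k → Bool)) (i : Fin p) : Fin (k+1) → Bool :=
  Fin.cons (v i ⟨0, hk⟩) (v (finRotate p i))

lemma tl_cedge (i : Fin p) : tl k (cedge hk v i) = v (finRotate p i) := tl_cons _ _

lemma hd_cedge (hv : IsCycle k p v) (i : Fin p) : hd k (cedge hk v i) = v i := by
  funext j
  obtain ⟨j, hj⟩ := j
  cases j with
  | zero =>
      show (Fin.cons (v i ⟨0, hk⟩) (v (finRotate p i)) : Fin (k+1) → Bool)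
        (Fin.castSucc ⟨0, hj⟩) = v i ⟨0, hj⟩
      have : (Fin.castSucc ⟨0, hj⟩ : Fin (k+1)) = 0 := by ext; simp
      rw [this, Fin.cons_zero]
  | succ m =>
      show (Fin.cons (v i ⟨0, hk⟩) (v (finRotate p i)) : Fin (k+1) → Bool)
        (Fin.castSucc ⟨m+1, hj⟩) = v i ⟨m+1, hj⟩
      have : (Fin.castSucc ⟨m+1, hj⟩ : Fin (k+1)) = Fin.succ ⟨m, by omega⟩ := by ext; simp
      rw [this, Fin.cons_succ, hv.2.2 i m hj]

lemma cedge_inj (hv : IsCycle k p v) : Function.Injective (cedge hk v) := by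
  intro i j h
  have := congrArg (tl k) h
  rw [tl_cedge, tl_cedge] at this
  exact (finRotate p).injective (hv.2.1 this)

end Cedge



section CM
variable {k p : ℕ} (hk : 0 < k) (v : Fin p → (Fin k → Bool))

lemma cm_eq : cycleMeasure k p hk v
    = fun η => (p : ℝ)⁻¹ * ∑ i : Fin p, if η = cedge hk v i then 1 else 0 := rfl

lemma sum_snoc_ite (η : Fin k → Bool) (e : Fin (k+1) → Bool) :
    (∑ σ : Bool, if Fin.snoc η σ = e then (1:ℝ) else 0) = if hd k e = η then 1 else 0 := by
  by_cases h : hd k e = η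
  · rw [if_pos h]
    have key : ∀ σ : Bool, (Fin.snoc η σ = e) ↔ (σ = e (Fin.last k)) := by
      intro σ
      constructor
      · intro h'; rw [← h', Fin.snoc_last]
      · intro h'; rw [h', ← h]; exact snoc_hd e
    simp only [key]
    simp
  · rw [if_neg h]
    have key : ∀ σ : Bool, ¬ (Fin.snoc η σ = e) := by
      intro σ h'
      exact h (by rw [← h']; exact hd_snoc η σ)
    simp [key]

lemma sum_cons_ite (η : Fin k → Bool) (e : Fin (k+1) → Bool) :
    (∑ σ : Bool, if Fin.cons σ η = e then (1:ℝ) else 0) = if tl k e = η then 1 else 0 := by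
  by_cases h : tl k e = η
  · rw [if_pos h]
    have key : ∀ σ : Bool, (Fin.cons σ η = e) ↔ (σ = e 0) := by
      intro σ
      constructor
      · intro h'; rw [← h', Fin.cons_zero]
      · intro h'; rw [h', ← h]; exact cons_hd_tl e
    simp only [key]
    simp
  · rw [if_neg h]
    have key : ∀ σ : Bool, ¬ (Fin.cons σ η = e) := by
      intro σ h'
      exact h (by rw [← h']; exact tl_cons η σ)
    simp [key]

lemma cm_nonneg (η : Fin (k+1) → Bool) : 0 ≤ cycleMeasure k p hk v η := by
  rw [cm_eq]
  have : (0:ℝ) ≤ ∑ i : Fin p, if η = cedge hk v i then (1:ℝ) else 0 :=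
    Finset.sum_nonneg fun i _ => by positivity
  positivity

lemma cm_sum (hp : 0 < p) : (∑ η, cycleMeasure k p hk v η) = 1 := by
  rw [cm_eq]
  rw [← Finset.mul_sum, Finset.sum_comm]
  have : ∀ i : Fin p, (∑ η : Fin (k+1) → Bool, if η = cedge hk v i then (1:ℝ) else 0) = 1 := by
    intro i; simp
  rw [Finset.sum_congr rfl fun i _ => this i]
  simp
  field_simp

lemma cm_lti (hv : IsCycle k p v) : IsLTI k (cycleMeasure k p hk v) := by
  intro η
  rw [cm_eq]
  simp only
  rw [← Finset.mul_sum, ← Finset.mul_sum, Finset.sum_comm, Finset.sum_comm (s := Finset.univ (α := Bool))]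
  congr 1
  have h1 : ∀ i : Fin p, (∑ σ : Bool, if Fin.snoc η σ = cedge hk v i then (1:ℝ) else 0)
      = if v i = η then 1 else 0 := by
    intro i; rw [sum_snoc_ite, hd_cedge hk v hv]
  have h2 : ∀ i : Fin p, (∑ σ : Bool, if Fin.cons σ η = cedge hk v i then (1:ℝ) else 0)
      = if v (finRotate p i) = η then 1 else 0 := by
    intro i; rw [sum_cons_ite, tl_cedge]
  rw [Finset.sum_congr rfl fun i _ => h1 i, Finset.sum_congr rfl fun i _ => h2 i]
  exact (Fintype.sum_equiv (finRotate p) _ _ fun i => rfl).symm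

lemma cm_apply_cedge (hv : IsCycle k p v) (i : Fin p) :
    cycleMeasure k p hk v (cedge hk v i) = (p : ℝ)⁻¹ := by
  rw [cm_eq]
  simp only
  have : ∀ j : Fin p, (if cedge hk v i = cedge hk v j then (1:ℝ) else 0)
      = if j = i then 1 else 0 := by
    intro j
    by_cases h : j = i
    · subst h; simp
    · rw [if_neg (fun h' => h (cedge_inj hk v hv h'.symm)), if_neg h]
  rw [Finset.sum_congr rfl fun j _ => this j]
  simp

lemma cm_apply_notin (η : Fin (k+1) → Bool) (hη : ∀ i, η ≠ cedge hk v i) :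
    cycleMeasure k p hk v η = 0 := by
  rw [cm_eq]
  simp only
  rw [Finset.sum_congr rfl fun j _ => if_neg (hη j)]
  simp

end CM

section Rigid
variable {k p : ℕ} (hk : 0 < k) (v : Fin p → (Fin k → Bool))

lemma sum_snoc_ite_c (η : Fin k → Bool) (e : Fin (k+1) → Bool) (c : ℝ) :
    (∑ σ : Bool, if Fin.snoc η σ = e then c else 0) = if hd k e = η then c else 0 := by
  by_cases h : hd k e = η
  · rw [if_pos h]
    have key : ∀ σ : Bool, (Fin.snoc η σ = e) ↔ (σ = e (Fin.last k)) := by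
      intro σ
      constructor
      · intro h'; rw [← h', Fin.snoc_last]
      · intro h'; rw [h', ← h]; exact snoc_hd e
    simp only [key]
    simp
  · rw [if_neg h]
    have key : ∀ σ : Bool, ¬ (Fin.snoc η σ = e) := by
      intro σ h'
      exact h (by rw [← h']; exact hd_snoc η σ)
    simp [key]

lemma sum_cons_ite_c (η : Fin k → Bool) (e : Fin (k+1) → Bool) (c : ℝ) :
    (∑ σ : Bool, if Fin.cons σ η = e then c else 0) = if tl k e = η then c else 0 := by
  by_cases h : tl k e = η
  · rw [if_pos h]
    have key : ∀ σ : Bool, (Fin.cons σ η = e) ↔ (σ = e 0) := by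
      intro σ
      constructor
      · intro h'; rw [← h', Fin.cons_zero]
      · intro h'; rw [h', ← h]; exact cons_hd_tl e
    simp only [key]
    simp
  · rw [if_neg h]
    have key : ∀ σ : Bool, ¬ (Fin.cons σ η = e) := by
      intro σ h'
      exact h (by rw [← h']; exact tl_cons η σ)
    simp [key]

open Fin.NatCast in
lemma supported_eq_cm (hv : IsCycle k p v) (x : (Fin (k+1) → Bool) → ℝ)
    (hx1 : (∑ η, x η) = 1) (hlti : IsLTI k x)
    (hsupp : ∀ η, (∀ i, η ≠ cedge hk v i) → x η = 0) :
    x = cycleMeasure k p hk v := by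
  obtain ⟨hp, hinj, hcyc⟩ := hv
  -- flow: value constant along the cycle
  have flow : ∀ i : Fin p, x (cedge hk v i) = x (cedge hk v (finRotate p i)) := by
    intro i
    set w := v (finRotate p i) with hw
    have hL : ∀ σ : Bool, x (Fin.snoc w σ)
        = if Fin.snoc w σ = cedge hk v (finRotate p i) then x (cedge hk v (finRotate p i)) else 0 := by
      intro σ
      by_cases h : Fin.snoc w σ = cedge hk v (finRotate p i)
      · rw [if_pos h, h]
      · rw [if_neg h]
        refine hsupp _ fun j hj => h ?_
        have : v j = w := by
          rw [← hd_cedge hk v ⟨hp, hinj, hcyc⟩ j, ← hj]; exact hd_snoc w σ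
        rw [hj, hinj this]
    have hR : ∀ σ : Bool, x (Fin.cons σ w)
        = if Fin.cons σ w = cedge hk v i then x (cedge hk v i) else 0 := by
      intro σ
      by_cases h : Fin.cons σ w = cedge hk v i
      · rw [if_pos h, h]
      · rw [if_neg h]
        refine hsupp _ fun j hj => h ?_
        have : v (finRotate p j) = v (finRotate p i) := by
          rw [← tl_cedge hk v j, ← hj]; exact tl_cons w σ
        rw [hj, (finRotate p).injective (hinj this)]
    have := hlti w
    rw [Finset.sum_congr rfl fun σ _ => hL σ, Finset.sum_congr rfl fun σ _ => hR σ,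
      sum_snoc_ite_c, sum_cons_ite_c, hd_cedge hk v ⟨hp, hinj, hcyc⟩,
      tl_cedge] at this
    rw [if_pos rfl, if_pos rfl] at this
    exact this.symm
  -- constancy
  obtain ⟨p', rfl⟩ : ∃ p', p = p' + 1 := ⟨p - 1, by omega⟩
  have const : ∀ i : Fin (p' + 1), x (cedge hk v i) = x (cedge hk v 0) := by
    have key : ∀ m : ℕ, x (cedge hk v (m : Fin (p' + 1))) = x (cedge hk v 0) := by
      intro m
      induction m with
      | zero => simp
      | succ n ih =>
          rw [Nat.cast_add_one, ← finRotate_succ_apply, ← flow, ih]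
    intro i
    rw [← Fin.cast_val_eq_self i]
    exact key i.val
  -- total mass
  have hsum : (∑ i : Fin (p' + 1), x (cedge hk v i)) = 1 := by
    rw [← hx1]
    have himg : (∑ η ∈ Finset.univ.image (cedge hk v), x η)
        = ∑ i : Fin (p' + 1), x (cedge hk v i) :=
      by rw [Finset.sum_image]; intro i _ j _ h; exact cedge_inj hk v ⟨hp, hinj, hcyc⟩ h
    rw [← himg]
    refine Finset.sum_subset (Finset.subset_univ (Finset.univ.image (cedge hk v))) ?_
    intro η _ hη
    refine hsupp η fun i hi => hη ?_
    rw [hi]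
    exact Finset.mem_image_of_mem _ (Finset.mem_univ i)
  have hval : x (cedge hk v 0) = ((p' + 1 : ℕ) : ℝ)⁻¹ := by
    rw [Finset.sum_congr rfl fun i _ => const i, Finset.sum_const, Finset.card_univ,
      Fintype.card_fin, nsmul_eq_mul] at hsum
    have : ((p' + 1 : ℕ) : ℝ) ≠ 0 := by positivity
    field_simp at hsum ⊢
    linarith [hsum]
  funext η
  by_cases h : ∃ i, η = cedge hk v i
  · obtain ⟨i, rfl⟩ := h
    rw [const i, hval, cm_apply_cedge hk v ⟨hp, hinj, hcyc⟩]
  · push_neg at h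
    rw [hsupp η h, cm_apply_notin hk v η h]

end Rigid

section Back
variable {k p : ℕ} (hk : 0 < k) (v : Fin p → (Fin k → Bool))

abbrev Mset (k : ℕ) : Set ((Fin (k+1) → Bool) → ℝ) :=
  {ν | (∀ η, 0 ≤ ν η) ∧ (∑ η, ν η) = 1 ∧ IsLTI k ν}

lemma cm_mem (hv : IsCycle k p v) : cycleMeasure k p hk v ∈ Mset k :=
  ⟨cm_nonneg hk v, cm_sum hk v hv.1, cm_lti hk v hv⟩

lemma cm_extreme (hv : IsCycle k p v) :
    cycleMeasure k p hk v ∈ Set.extremePoints ℝ (Mset k) := by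
  rw [mem_extremePoints]
  refine ⟨cm_mem hk v hv, ?_⟩
  rintro x₁ hx₁ x₂ hx₂ ⟨a, b, ha, hb, hab, hseg⟩
  have key : ∀ (x : (Fin (k+1) → Bool) → ℝ), x ∈ Mset k →
      (∀ η, (∀ i, η ≠ cedge hk v i) → x η = 0) → x = cycleMeasure k p hk v := by
    intro x hx hs
    exact supported_eq_cm hk v hv x hx.2.1 hx.2.2 hs
  have hzero : ∀ η, (∀ i, η ≠ cedge hk v i) → x₁ η = 0 ∧ x₂ η = 0 := by
    intro η hη
    have h0 : a * x₁ η + b * x₂ η = 0 := by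
      have := congrFun hseg η
      simp only [Pi.add_apply, Pi.smul_apply, smul_eq_mul] at this
      rw [this]
      exact cm_apply_notin hk v η hη
    have h1 : 0 ≤ x₁ η := hx₁.1 η
    have h2 : 0 ≤ x₂ η := hx₂.1 η
    constructor <;> nlinarith
  exact ⟨key x₁ hx₁ fun η hη => (hzero η hη).1, key x₂ hx₂ fun η hη => (hzero η hη).2⟩

end Back


section Fwd
variable {k : ℕ}

lemma step_exists (hk : 0 < k) (μ : (Fin (k+1) → Bool) → ℝ) (h0 : ∀ η, 0 ≤ μ η)
    (hlti : IsLTI k μ) (e : Fin (k+1) → Bool) (he : 0 < μ e) :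
    ∃ e', 0 < μ e' ∧ hd k e' = tl k e := by
  have hle : μ e ≤ ∑ σ : Bool, μ (Fin.cons σ (tl k e)) := by
    conv_lhs => rw [← cons_hd_tl e]
    exact Finset.single_le_sum (f := fun σ => μ (Fin.cons σ (tl k e)))
      (fun σ _ => h0 _) (Finset.mem_univ (e 0))
  have hin : 0 < ∑ σ : Bool, μ (Fin.snoc (tl k e) σ) := by
    rw [hlti (tl k e)]; exact lt_of_lt_of_le he hle
  have : ∃ σ, 0 < μ (Fin.snoc (tl k e) σ) := by
    by_contra h
    push_neg at h
    have : (∑ σ : Bool, μ (Fin.snoc (tl k e) σ)) ≤ 0 :=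
      Finset.sum_nonpos fun σ _ => h σ
    linarith
  obtain ⟨σ, hσ⟩ := this
  exact ⟨Fin.snoc (tl k e) σ, hσ, hd_snoc _ _⟩

lemma exists_cycle_pos (hk : 0 < k) (μ : (Fin (k+1) → Bool) → ℝ) (h0 : ∀ η, 0 ≤ μ η)
    (hs : (∑ η, μ η) = 1) (hlti : IsLTI k μ) :
    ∃ (p : ℕ) (v : Fin p → (Fin k → Bool)), IsCycle k p v ∧ ∀ i, 0 < μ (cedge hk v i) := by
  classical
  -- a starting edge
  have hstart : ∃ e, 0 < μ e := by
    by_contra h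
    push_neg at h
    have : ∀ η, μ η = 0 := fun η => le_antisymm (h η) (h0 η)
    rw [Finset.sum_congr rfl fun η _ => this η] at hs
    simp at hs
  obtain ⟨e₀, he₀⟩ := hstart
  -- the walk
  let F : {e : Fin (k+1) → Bool // 0 < μ e} → {e : Fin (k+1) → Bool // 0 < μ e} :=
    fun x => ⟨(step_exists hk μ h0 hlti x.1 x.2).choose,
      (step_exists hk μ h0 hlti x.1 x.2).choose_spec.1⟩
  have hF : ∀ x, hd k (F x).1 = tl k x.1 :=
    fun x => (step_exists hk μ h0 hlti x.1 x.2).choose_spec.2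
  let g : ℕ → {e : Fin (k+1) → Bool // 0 < μ e} := fun n => F^[n] ⟨e₀, he₀⟩
  let h : ℕ → Fin k → Bool := fun n => hd k (g n).1
  have htl : ∀ n, tl k (g n).1 = h (n + 1) := by
    intro n
    show tl k (g n).1 = hd k (g (n+1)).1
    have : g (n+1) = F (g n) := Function.iterate_succ_apply' F n _
    rw [this, hF]
  -- a repeated vertex
  have hrep : ∃ n, ∃ m, m < n ∧ h m = h n := by
    obtain ⟨a, b, hab, heq⟩ := Finite.exists_ne_map_eq_of_infinite h
    rcases lt_or_gt_of_ne hab with hlt | hlt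
    · exact ⟨b, a, hlt, heq⟩
    · exact ⟨a, b, hlt, heq.symm⟩
  obtain ⟨n, ⟨m, hmn, hmeq⟩, hmin⟩ :
      ∃ n, (∃ m, m < n ∧ h m = h n) ∧ ∀ b, b < n → ¬∃ a, a < b ∧ h a = h b :=
    ⟨Nat.find hrep, Nat.find_spec hrep, fun b hb => Nat.find_min hrep hb⟩
  obtain ⟨p, hmpn, hp⟩ : ∃ p, m + p = n ∧ 0 < p := ⟨n - m, by omega, by omega⟩
  -- the extracted cycle
  have hrotv : ∀ i : Fin p, h (m + (finRotate p i).val) = tl k (g (m + i.val)).1 := by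
    intro i
    rw [htl]
    obtain ⟨p', rfl⟩ : ∃ p', p = p' + 1 := ⟨p - 1, by omega⟩
    by_cases hi : i = Fin.last p'
    · have h1 : (finRotate (p' + 1) i).val = 0 := by
        rw [hi, finRotate_succ_apply]
        simp
      have h2 : i.val = p' := by simp [hi]
      rw [h1, h2]
      have h3 : m + p' + 1 = n := by omega
      rw [h3]
      simpa using hmeq
    · have h1 : (finRotate (p' + 1) i).val = i.val + 1 := by
        rw [finRotate_succ_apply, Fin.val_add_one, if_neg hi]
      rw [h1]
      rfl
  refine ⟨p, fun j => h (m + j.val), ⟨hp, ?_, ?_⟩, ?_⟩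
  · -- injectivity
    have key : ∀ a b : Fin p, a.val < b.val → h (m + a.val) ≠ h (m + b.val) := by
      intro a b hab heq
      exact hmin (m + b.val) (by omega) ⟨m + a.val, by omega, heq⟩
    intro i j hij
    rcases lt_trichotomy i.val j.val with hlt | heq | hlt
    · exact absurd hij (key i j hlt)
    · exact Fin.ext heq
    · exact absurd hij.symm (key j i hlt)
  · -- overlap condition
    intro i j hj
    show hd k (g (m + i.val)).1 ⟨j + 1, hj⟩ = h (m + (finRotate p i).val) ⟨j, by omega⟩
    rw [hrotv i]
    rfl
  · -- positivity of edge weights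
    intro i
    have hedge : cedge hk (fun j : Fin p => h (m + j.val)) i = (g (m + i.val)).1 := by
      show Fin.cons (h (m + i.val) ⟨0, hk⟩) (h (m + (finRotate p i).val))
        = (g (m + i.val)).1
      rw [hrotv i]
      have h0' : h (m + i.val) ⟨0, hk⟩ = (g (m + i.val)).1 0 := by
        show (g (m + i.val)).1 (Fin.castSucc ⟨0, hk⟩) = (g (m + i.val)).1 0
        congr 1
      rw [h0']
      exact cons_hd_tl _
    rw [hedge]
    exact (g (m + i.val)).2

end Fwd

lemma fwd {k : ℕ} (hk : 0 < k) (μ : (Fin (k+1) → Bool) → ℝ)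
    (hext : μ ∈ Set.extremePoints ℝ (Mset k)) :
    ∃ (p : ℕ) (v : Fin p → (Fin k → Bool)), IsCycle k p v ∧ μ = cycleMeasure k p hk v := by
  rw [mem_extremePoints] at hext
  obtain ⟨⟨h0, hs, hlti⟩, hexv⟩ := hext
  obtain ⟨p, v, hv, hpos⟩ := exists_cycle_pos hk μ h0 hs hlti
  refine ⟨p, v, hv, ?_⟩
  have hνmem : cycleMeasure k p hk v ∈ Mset k := cm_mem hk v hv
  set ν := cycleMeasure k p hk v with hνdef
  have hpR : (0:ℝ) < p := by exact_mod_cast hv.1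
  have hne : (Finset.univ : Finset (Fin p)).Nonempty := ⟨⟨0, hv.1⟩, Finset.mem_univ _⟩
  set m0 := Finset.univ.inf' hne (fun i => μ (cedge hk v i)) with hm0def
  have hm0le : ∀ i, m0 ≤ μ (cedge hk v i) := fun i => Finset.inf'_le _ (Finset.mem_univ i)
  have hm0pos : 0 < m0 := by
    rw [hm0def, Finset.lt_inf'_iff]
    intro i _
    exact hpos i
  set t := (p : ℝ) * m0 with htdef
  have himg : (∑ η ∈ Finset.univ.image (cedge hk v), μ η) = ∑ i, μ (cedge hk v i) := by
    rw [Finset.sum_image]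
    intro i _ j _ hij
    exact cedge_inj hk v hv hij
  have hsum_le : (∑ i, μ (cedge hk v i)) ≤ 1 := by
    rw [← hs, ← himg]
    exact Finset.sum_le_sum_of_subset_of_nonneg (Finset.subset_univ _) fun η _ _ => h0 η
  have hts : t ≤ ∑ i, μ (cedge hk v i) := by
    have : t = ∑ _i : Fin p, m0 := by
      rw [Finset.sum_const, Finset.card_univ, Fintype.card_fin, nsmul_eq_mul]
    rw [this]
    exact Finset.sum_le_sum fun i _ => hm0le i
  have ht1 : t ≤ 1 := le_trans hts hsum_le
  have ht0 : 0 < t := mul_pos hpR hm0pos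
  rcases eq_or_lt_of_le ht1 with heq | hlt
  · -- t = 1 : μ is itself the cycle measure
    have hoff : ∀ η, (∀ i, η ≠ cedge hk v i) → μ η = 0 := by
      intro η hη
      by_contra hne0
      have hpos' : 0 < μ η := lt_of_le_of_ne (h0 η) (Ne.symm hne0)
      have hημem : η ∉ Finset.univ.image (cedge hk v) := by
        simp only [Finset.mem_image]
        rintro ⟨i, -, hi⟩
        exact hη i hi.symm
      have hins : (∑ x ∈ insert η (Finset.univ.image (cedge hk v)), μ x) ≤ 1 := by
        rw [← hs]
        exact Finset.sum_le_sum_of_subset_of_nonneg (Finset.subset_univ _) fun η _ _ => h0 η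
      rw [Finset.sum_insert hημem, himg] at hins
      linarith
    exact supported_eq_cm hk v hv μ hs hlti hoff
  · -- t < 1 : use extremality
    have h1t : (0:ℝ) < 1 - t := by linarith
    set x₂ : (Fin (k+1) → Bool) → ℝ := fun η => (1 - t)⁻¹ * (μ η - t * ν η) with hx₂def
    have hx₂mem : x₂ ∈ Mset k := by
      refine ⟨?_, ?_, ?_⟩
      · intro η
        by_cases hη : ∃ i, η = cedge hk v i
        · obtain ⟨i, rfl⟩ := hη
          have hν : ν (cedge hk v i) = (p:ℝ)⁻¹ := cm_apply_cedge hk v hv i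
          have htp : t * (p:ℝ)⁻¹ = m0 := by
            rw [htdef]
            field_simp
          have : 0 ≤ μ (cedge hk v i) - t * ν (cedge hk v i) := by
            rw [hν, htp]
            linarith [hm0le i]
          positivity
        · push_neg at hη
          have hν : ν η = 0 := cm_apply_notin hk v η hη
          have : 0 ≤ μ η - t * ν η := by rw [hν]; simpa using h0 η
          positivity
      · rw [hx₂def]
        simp only
        rw [← Finset.mul_sum, Finset.sum_sub_distrib, ← Finset.mul_sum, hs,
          hνdef, cm_sum hk v hv.1]
        field_simp
      · intro η
        rw [hx₂def]
        simp only
        rw [← Finset.mul_sum, ← Finset.mul_sum, Finset.sum_sub_distrib,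
          Finset.sum_sub_distrib, ← Finset.mul_sum, ← Finset.mul_sum, hlti η,
          hνdef, cm_lti hk v hv η]
    have hseg : μ ∈ openSegment ℝ ν x₂ := by
      refine ⟨t, 1 - t, ht0, h1t, by ring, ?_⟩
      funext η
      simp only [Pi.add_apply, Pi.smul_apply, smul_eq_mul, hx₂def]
      field_simp
      ring
    exact (hexv ν hνmem x₂ hx₂mem hseg).1.symm

/-- The cycle measures are precisely the extreme points of the polytope `M_k` of
locally translation invariant probability measures on `{0,1}^{k+1}`. -/
theorem stmt11 (k : ℕ) (hk : 0 < k) (μ : (Fin (k + 1) → Bool) → ℝ) :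
    μ ∈ Set.extremePoints ℝ
        {ν : (Fin (k + 1) → Bool) → ℝ | (∀ η, 0 ≤ ν η) ∧ (∑ η, ν η) = 1 ∧ IsLTI k ν}
      ↔ ∃ (p : ℕ) (v : Fin p → (Fin k → Bool)),
          IsCycle k p v ∧ μ = cycleMeasure k p hk v := by
  constructor
  · intro hext
    exact fwd hk μ hext
  · rintro ⟨p, v, hv, rfl⟩
    exact cm_extreme hk v hv
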